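/- Let M be a matroid and S, T subsets of the ground set obeying the modular law, i.e., rk(S ∪ T) + rk(S ∩ T) = rk(S) + rk(T). Then a subset I ⊆ S is independent in the contraction of S by T (i.e., I ∪ J independent for some basis J of T with I ⊆ S \ T) if and only if I is independent in the contraction of S by S ∩ T. -/

import Mathlib

/-- The rank of a set in a matroid: the maximal cardinality of an independent subset. -/
noncomputable def matroidRk {α : Type*} (M : Matroid α) (S : Set α) : ℕ :=
  sSup {n : ℕ | ∃ I ⊆ S, M.Indep I ∧ I.ncard = n}

open Set

section Aux

variable {α : Type*} {M : Matroid α} [M.Finite] {I J X A B : Set α}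

lemma matroidRk_bddAbove (M : Matroid α) [M.Finite] (X : Set α) :
    BddAbove {n : ℕ | ∃ I ⊆ X, M.Indep I ∧ I.ncard = n} := by
  refine ⟨M.E.ncard, fun n hn => ?_⟩
  obtain ⟨I, _, hI, rfl⟩ := hn
  exact ncard_le_ncard hI.subset_ground M.ground_finite

lemma ncard_le_matroidRk (hI : M.Indep I) (hIX : I ⊆ X) : I.ncard ≤ matroidRk M X :=
  le_csSup (matroidRk_bddAbove M X) ⟨I, hIX, hI, rfl⟩

lemma matroidRk_eq_ncard_of_basis (hJ : M.IsBasis J X) : matroidRk M X = J.ncard := by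
  refine le_antisymm (csSup_le ⟨0, ∅, empty_subset _, M.empty_indep, by simp⟩ ?_)
    (ncard_le_matroidRk hJ.indep hJ.subset)
  rintro n ⟨I, hIX, hI, rfl⟩
  obtain ⟨J', hJ', hIJ'⟩ := hI.subset_isBasis_of_subset hIX hJ.subset_ground
  have hcard : J'.ncard = J.ncard := by
    have := hJ'.encard_eq_encard hJ
    simp [Set.ncard, this]
  calc I.ncard ≤ J'.ncard := ncard_le_ncard hIJ' (M.set_finite J' hJ'.indep.subset_ground)
    _ = J.ncard := hcard

lemma matroidRk_union_le (hIE : I ⊆ M.E) (hX : X ⊆ M.E) :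
    matroidRk M (I ∪ X) ≤ I.ncard + matroidRk M X := by
  obtain ⟨K, hK⟩ := M.exists_isBasis (I ∪ X) (union_subset hIE hX)
  rw [matroidRk_eq_ncard_of_basis hK]
  have hKfin : K.Finite := M.set_finite K hK.indep.subset_ground
  have h1 : K.ncard = (K ∩ I).ncard + (K \ I).ncard := by
    rw [← ncard_union_eq (disjoint_sdiff_right.mono_left inter_subset_right)
      (hKfin.inter_of_left I) (hKfin.diff (t := I)), inter_union_diff]
  rw [h1]
  exact Nat.add_le_add (ncard_le_ncard inter_subset_right (M.set_finite I hIE))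
    (ncard_le_matroidRk (hK.indep.subset diff_subset)
      (fun x hx => (hK.subset hx.1).resolve_left hx.2))

lemma matroidRk_submodular (hA : A ⊆ M.E) (hB : B ⊆ M.E) :
    matroidRk M (A ∪ B) + matroidRk M (A ∩ B) ≤ matroidRk M A + matroidRk M B := by
  obtain ⟨I, hI⟩ := M.exists_isBasis (A ∩ B) ((inter_subset_left).trans hA)
  obtain ⟨J, hJ, hIJ⟩ := hI.indep.subset_isBasis_of_subset
    (hI.subset.trans ((inter_subset_left).trans subset_union_left))
    (union_subset hA hB)
  have hJfin : J.Finite := M.set_finite J hJ.indep.subset_ground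
  have hJAB : J ∩ (A ∩ B) = I :=
    (hI.eq_of_subset_indep (hJ.indep.inter_right (A ∩ B))
      (subset_inter hIJ hI.subset) inter_subset_right).symm
  have hJeq : J ∩ (A ∪ B) = J := inter_eq_left.mpr hJ.subset
  have hcard : J.ncard + I.ncard = (J ∩ A).ncard + (J ∩ B).ncard := by
    have := ncard_union_add_ncard_inter (J ∩ A) (J ∩ B)
      (hJfin.inter_of_left A) (hJfin.inter_of_left B)
    rwa [← inter_union_distrib_left, ← inter_inter_distrib_left, hJeq, hJAB] at this
  rw [matroidRk_eq_ncard_of_basis hJ, matroidRk_eq_ncard_of_basis hI, hcard]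
  gcongr
  · exact ncard_le_matroidRk (hJ.indep.inter_right A) inter_subset_right
  · exact ncard_le_matroidRk (hJ.indep.inter_right B) inter_subset_right

/-- Characterization: `I` is independent in the contraction by `X` iff the rank equation holds. -/
lemma basis_union_indep_iff (hX : X ⊆ M.E) (hIE : I ⊆ M.E) (hdisj : Disjoint I X) :
    (∃ J, M.IsBasis J X ∧ M.Indep (I ∪ J)) ↔
      matroidRk M (I ∪ X) = I.ncard + matroidRk M X := by
  have hIfin : I.Finite := M.set_finite I hIE
  constructor
  · rintro ⟨J, hJ, hIJ⟩
    refine le_antisymm (matroidRk_union_le hIE hX) ?_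
    rw [matroidRk_eq_ncard_of_basis hJ,
      ← ncard_union_eq (hdisj.mono_right hJ.subset) hIfin
        (M.set_finite J hJ.indep.subset_ground)]
    exact ncard_le_matroidRk hIJ (union_subset_union_right I hJ.subset)
  · intro hr
    obtain ⟨J, hJ⟩ := M.exists_isBasis X hX
    obtain ⟨K, hK, hJK⟩ := hJ.indep.subset_isBasis_of_subset
      (hJ.subset.trans subset_union_right) (union_subset hIE hX)
    have hKfin : K.Finite := M.set_finite K hK.indep.subset_ground
    have hKX : K ∩ X = J :=
      (hJ.eq_of_subset_indep (hK.indep.inter_right X)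
        (subset_inter hJK hJ.subset) inter_subset_right).symm
    have hKI : K \ X ⊆ I := fun x hx => (hK.subset hx.1).resolve_right hx.2
    have hcard : K.ncard = (K \ X).ncard + J.ncard := by
      rw [← hKX, ← ncard_union_eq (disjoint_sdiff_left.mono_right inter_subset_right)
        (hKfin.diff (t := X)) (hKfin.inter_of_left X), diff_union_inter]
    have hKncard : K.ncard = I.ncard + J.ncard := by
      rw [← matroidRk_eq_ncard_of_basis hK, hr, matroidRk_eq_ncard_of_basis hJ]
    have hdiffI : K \ X = I := by
      refine Set.eq_of_subset_of_ncard_le hKI ?_ hIfin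
      omega
    refine ⟨J, hJ, hK.indep.subset ?_⟩
    rw [← hdiffI, ← hKX]
    exact union_subset diff_subset inter_subset_left

end Aux

theorem stmt3 {α : Type*} (M : Matroid α) [M.Finite] (S T : Set α)
    (hS : S ⊆ M.E) (hT : T ⊆ M.E)
    (hmod : matroidRk M (S ∪ T) + matroidRk M (S ∩ T) = matroidRk M S + matroidRk M T)
    (I : Set α) (hI : I ⊆ S \ T) :
    (∃ J, M.IsBasis J T ∧ M.Indep (I ∪ J)) ↔
      (∃ J, M.IsBasis J (S ∩ T) ∧ M.Indep (I ∪ J)) := by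
  have hIS : I ⊆ S := fun x hx => (hI hx).1
  have hIE : I ⊆ M.E := hIS.trans hS
  have hIT : Disjoint I T := disjoint_left.mpr fun x hx => (hI hx).2
  have hIST : Disjoint I (S ∩ T) := hIT.mono_right inter_subset_right
  have hSTE : S ∩ T ⊆ M.E := inter_subset_left.trans hS
  rw [basis_union_indep_iff hT hIE hIT, basis_union_indep_iff hSTE hIE hIST]
  have e1 : (I ∪ S ∩ T) ∪ T = I ∪ T := by
    rw [union_assoc, union_eq_self_of_subset_left inter_subset_right]
  have e2 : (I ∪ S ∩ T) ∩ T = S ∩ T := by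
    ext x
    have := fun hx : x ∈ I => (hI hx).2
    simp only [mem_union, mem_inter_iff]
    tauto
  have e3 : (I ∪ T) ∪ S = S ∪ T := by
    ext x
    have := fun hx : x ∈ I => (hI hx).1
    simp only [mem_union]
    tauto
  have e4 : (I ∪ T) ∩ S = I ∪ S ∩ T := by
    ext x
    have := fun hx : x ∈ I => (hI hx).1
    simp only [mem_union, mem_inter_iff]
    tauto
  have sub1 := matroidRk_submodular (M := M) (union_subset hIE hSTE) hT
  rw [e1, e2] at sub1
  have sub2 := matroidRk_submodular (M := M) (union_subset hIE hT) hS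
  rw [e3, e4] at sub2
  have le1 := matroidRk_union_le (M := M) hIE hT
  have le2 := matroidRk_union_le (M := M) hIE hSTE
  constructor <;> intro h <;> omega
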